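/- Let f : X → Y be a weakly discontinuous map between topological spaces and let κ be an infinite cardinal such that: (i) every closed subset of X is the intersection of a family of at most κ open subsets of X; and (ii) every open cover U of X admits a refinement consisting of closed subsets of X covering X that can be written as a union of at most κ many families of closed subsets of X, each family locally finite in X, where each member of the refinement is contained in some member of U. Then there exists a cover C of X by closed subsets with |C| ≤ κ such that the restriction f|C is continuous for every C ∈ C. -/

import Mathlib

open Set Topology

universe u v

namespace DecAux

variable {X : Type u} {Y : Type v} [TopologicalSpace X] [TopologicalSpace Y] (f : X → Y)

/-- One derivative step: the closure of the set of discontinuity points of `f` within `A`. -/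
def dstep (A : Set X) : Set X := closure (A ∩ {x | ¬ ContinuousWithinAt f A x})

theorem dstep_mono {A B : Set X} (h : A ⊆ B) : dstep f A ⊆ dstep f B :=
  closure_mono fun x hx => ⟨h hx.1, fun hc => hx.2 (hc.mono h)⟩

theorem dstep_subset {A : Set X} (hA : IsClosed A) : dstep f A ⊆ A :=
  closure_minimal inter_subset_left hA

noncomputable def der : Ordinal.{u} → Set X :=
  Ordinal.lt_wf.fix fun α ih => ⋂ β : Iio α, dstep f (ih β.1 β.2)

theorem der_def (α : Ordinal.{u}) : der f α = ⋂ β : Iio α, dstep f (der f β.1) := by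
  exact Ordinal.lt_wf.fix_eq _ α

theorem isClosed_der (α : Ordinal.{u}) : IsClosed (der f α) := by
  rw [der_def]; exact isClosed_iInter fun β => isClosed_closure

theorem der_anti {α γ : Ordinal.{u}} (h : α ≤ γ) : der f γ ⊆ der f α := by
  rw [der_def f α, der_def f γ]
  exact fun x hx => mem_iInter.2 fun β => mem_iInter.1 hx ⟨β.1, lt_of_lt_of_le β.2 h⟩

theorem der_zero : der f 0 = univ := by
  rw [der_def]
  simp

theorem der_succ (α : Ordinal.{u}) : der f (Order.succ α) = dstep f (der f α) := by
  apply subset_antisymm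
  · rw [der_def]
    exact fun x hx => mem_iInter.1 hx ⟨α, Order.lt_succ α⟩
  · rw [der_def f (Order.succ α)]
    intro x hx
    refine mem_iInter.2 fun β => ?_
    exact dstep_mono f (der_anti f (Order.lt_succ_iff.1 β.2)) hx

theorem cwa_of_notin {α : Ordinal.{u}} {x : X} (hx : x ∈ der f α)
    (hx' : x ∉ der f (Order.succ α)) : ContinuousWithinAt f (der f α) x := by
  rw [der_succ] at hx'
  by_contra h
  exact hx' (subset_closure ⟨hx, h⟩)

theorem notin_succ_of_notin {γ : Ordinal.{u}} {x : X} (hx : x ∉ der f γ) :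
    ∃ β < γ, x ∉ der f (Order.succ β) := by
  rw [der_def] at hx
  simp only [mem_iInter, Subtype.forall, mem_Iio, not_forall] at hx
  obtain ⟨β, hβ, h⟩ := hx
  exact ⟨β, hβ, by rwa [der_succ]⟩


/-- The definition of weak discontinuity, repeated to avoid a forward reference. -/
def WD (f : X → Y) : Prop :=
  ∀ A : Set X, A.Nonempty →
    IsNowhereDense {a : A | ¬ ContinuousWithinAt f A (a : X)}

variable {f}

theorem der_succ_ne (hwd : WD f) {α : Ordinal.{u}} (h : (der f α).Nonempty) :
    der f (Order.succ α) ≠ der f α := by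
  intro heq
  set A : Set X := der f α with hA
  have hAc : IsClosed A := isClosed_der f α
  have hnd := hwd A h
  have hdst : dstep f A = A := by rw [← der_succ, heq]
  have him : Subtype.val '' {a : A | ¬ ContinuousWithinAt f A (a : X)}
      = A ∩ {x | ¬ ContinuousWithinAt f A x} := by
    ext x
    simp only [mem_image, mem_setOf_eq, mem_inter_iff]
    constructor
    · rintro ⟨a, ha, rfl⟩; exact ⟨a.2, ha⟩
    · rintro ⟨hx, hx'⟩; exact ⟨⟨x, hx⟩, hx', rfl⟩
  have hcl : closure {a : A | ¬ ContinuousWithinAt f A (a : X)} = univ := by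
    ext a
    simp only [mem_univ, iff_true]
    rw [closure_subtype, him]
    show (a : X) ∈ dstep f A
    rw [hdst]; exact a.2
  have : Nonempty A := h.to_subtype
  rw [IsNowhereDense, hcl, interior_univ] at hnd
  exact univ_nonempty.ne_empty hnd

theorem exists_der_empty (hwd : WD f) : ∃ δ : Ordinal.{u}, der f δ = ∅ := by
  by_contra h
  push_neg at h
  have key : ∀ α γ : Ordinal.{u}, α < γ → der f α = der f γ → False := by
    intro α γ hlt hag
    refine der_succ_ne hwd (h α) ?_
    refine subset_antisymm (der_anti f (Order.le_succ α)) ?_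
    calc der f α = der f γ := hag
    _ ⊆ der f (Order.succ α) := der_anti f (Order.succ_le_of_lt hlt)
  refine not_injective_of_ordinal (der f) ?_
  intro α γ hag
  rcases lt_trichotomy α γ with hlt | heq | hlt
  · exact absurd hag (fun hh => key α γ hlt hh)
  · exact heq
  · exact absurd hag.symm (fun hh => key γ α hlt hh)

variable (f) in
/-- The least ordinal `α` such that `t` misses the `α`-th derived set. -/
noncomputable def msr (t : Set X) : Ordinal.{u} := sInf {α | t ∩ der f α = ∅}

theorem msr_spec (hwd : WD f) (t : Set X) : t ∩ der f (msr f t) = ∅ := by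
  have : {α | t ∩ der f α = ∅}.Nonempty := by
    obtain ⟨δ, hδ⟩ := exists_der_empty hwd
    exact ⟨δ, by simp [hδ]⟩
  exact csInf_mem this

theorem msr_le {t : Set X} {α : Ordinal.{u}} (h : t ∩ der f α = ∅) : msr f t ≤ α :=
  csInf_le' h

theorem msr_empty : msr f (∅ : Set X) = 0 :=
  le_antisymm (msr_le (by simp)) zero_le

theorem msr_pos (hwd : WD f) {t : Set X} (h : t.Nonempty) : 0 < msr f t := by
  refine pos_iff_ne_zero.2 (fun h0 => ?_)
  have := msr_spec hwd t
  rw [h0, der_zero, inter_univ] at this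
  exact h.ne_empty this

theorem cwa_empty {x : X} : ContinuousWithinAt f (∅ : Set X) x := by
  rw [ContinuousWithinAt, nhdsWithin_empty]
  exact Filter.tendsto_bot

theorem cwa_biUnion {ι : Type*} {s : Set ι} (hs : s.Finite) {F : ι → Set X} {x : X}
    (h : ∀ i ∈ s, ContinuousWithinAt f (F i) x) :
    ContinuousWithinAt f (⋃ i ∈ s, F i) x := by
  refine Set.Finite.induction_on
    (motive := fun s _ => (∀ i ∈ s, ContinuousWithinAt f (F i) x) →
      ContinuousWithinAt f (⋃ i ∈ s, F i) x) s hs (fun _ => by simpa using cwa_empty)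
    ?_ h
  intro a s' _ _ ih h'
  rw [biUnion_insert]
  exact (h' _ (mem_insert _ _)).union (ih fun i hi => h' i (mem_insert_of_mem _ hi))

/-- Pasting lemma: a locally finite union of closed sets on each of which `f` is
continuous is a set on which `f` is continuous. -/
theorem continuousOn_iUnion_of_lf {ι : Type*} {F : ι → Set X} (lf : LocallyFinite F)
    (hcl : ∀ i, IsClosed (F i)) (hct : ∀ i, ContinuousOn f (F i)) :
    ContinuousOn f (⋃ i, F i) := by
  intro x hx
  obtain ⟨N, hN, hfin⟩ := lf x
  obtain ⟨O, hON, hO, hxO⟩ := mem_nhds_iff.1 hN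
  have hI1 : {i | (F i ∩ N).Nonempty ∧ x ∈ F i}.Finite :=
    hfin.subset fun i hi => hi.1
  have hI2 : {i | (F i ∩ N).Nonempty ∧ x ∉ F i}.Finite :=
    hfin.subset fun i hi => hi.1
  have hB : ContinuousWithinAt f (⋃ i ∈ {i | (F i ∩ N).Nonempty ∧ x ∈ F i}, F i) x :=
    cwa_biUnion hI1 fun i hi => hct i x hi.2
  have hBad : IsClosed (⋃ i ∈ {i | (F i ∩ N).Nonempty ∧ x ∉ F i}, F i) :=
    hI2.isClosed_biUnion fun i _ => hcl i
  have hxBad : x ∉ ⋃ i ∈ {i | (F i ∩ N).Nonempty ∧ x ∉ F i}, F i := by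
    intro hx'
    obtain ⟨i, hi, hxi⟩ := mem_iUnion₂.1 hx'
    exact hi.2 hxi
  refine hB.mono_of_mem_nhdsWithin (mem_nhdsWithin.2
    ⟨O ∩ (⋃ i ∈ {i | (F i ∩ N).Nonempty ∧ x ∉ F i}, F i)ᶜ,
      hO.inter hBad.isOpen_compl, ⟨hxO, hxBad⟩, ?_⟩)
  rintro y ⟨⟨hyO, hyBad⟩, hy⟩
  obtain ⟨i, hyi⟩ := mem_iUnion.1 hy
  have hiN : (F i ∩ N).Nonempty := ⟨y, hyi, hON hyO⟩
  have hxFi : x ∈ F i := by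
    by_contra hxi
    exact hyBad (mem_biUnion ⟨hiN, hxi⟩ hyi)
  exact mem_biUnion ⟨hiN, hxFi⟩ hyi

/-- Conversion between subtype-indexed finiteness and set finiteness. -/
theorem finite_subtype_iff {A : Set (Set X)} {p : Set X → Prop} :
    {i : A | p (i : Set X)}.Finite ↔ {s ∈ A | p s}.Finite := by
  constructor
  · intro h
    have : {s ∈ A | p s} = Subtype.val '' {i : A | p (i : Set X)} := by
      ext s
      simp only [mem_image, mem_setOf_eq, Subtype.exists, exists_and_right, exists_eq_right,
        mem_sep_iff]
      tauto
    rw [this]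
    exact h.image _
  · intro h
    have : {i : A | p (i : Set X)} = Subtype.val ⁻¹' {s ∈ A | p s} := by
      ext i
      simp [i.2]
    rw [this]
    exact h.preimage Subtype.val_injective.injOn

omit [TopologicalSpace Y] in
/-- From condition (i): the complement of a closed set is a union of `κ.out`-many
closed sets. -/
theorem exists_closed_decomp (κ : Cardinal.{u})
    (hΨ : ∀ F : Set X, IsClosed F →
      ∃ U : Set (Set X), (∀ u ∈ U, IsOpen u) ∧ Cardinal.mk U ≤ κ ∧ F = ⋂₀ U)
    (F : Set X) (hF : IsClosed F) :
    ∃ E : κ.out → Set X, (∀ j, IsClosed (E j)) ∧ (⋃ j, E j) = Fᶜ := by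
  obtain ⟨U, hUopen, hUcard, hUF⟩ := hΨ F hF
  rcases eq_empty_or_nonempty U with rfl | hUne
  · refine ⟨fun _ => ∅, fun _ => isClosed_empty, ?_⟩
    rw [hUF]
    simp
  · have : Nonempty ↥U := hUne.to_subtype
    obtain ⟨e⟩ : Nonempty (↥U ↪ κ.out) := by
      rw [← Cardinal.le_def, Cardinal.mk_out]
      exact hUcard
    have hσ : Function.Surjective (Function.invFun e) := Function.invFun_surjective e.injective
    refine ⟨fun j => (↑(Function.invFun e j) : Set X)ᶜ,
      fun j => (hUopen _ (Function.invFun e j).2).isClosed_compl, ?_⟩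
    rw [← compl_iInter, hσ.iInter_comp (fun u : ↥U => (u : Set X)), hUF, sInter_eq_iInter]

/-- From condition (ii): reindexed by `κ.out`. -/
theorem par_reindex (κ : Cardinal.{u}) (hne : Nonempty X)
    (hpar : ∀ U : Set (Set X), (∀ u ∈ U, IsOpen u) → ⋃₀ U = Set.univ →
      ∃ (ι : Type u) (F : ι → Set (Set X)),
        Cardinal.mk ι ≤ κ ∧
        (∀ i, ∀ s ∈ F i, IsClosed s) ∧
        (∀ i, LocallyFinite (fun s : F i => (s : Set X))) ∧
        (∀ i, ∀ s ∈ F i, ∃ u ∈ U, s ⊆ u) ∧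
        (⋃ i, ⋃₀ F i) = Set.univ)
    (U : Set (Set X)) (hUo : ∀ u ∈ U, IsOpen u) (hUc : ⋃₀ U = Set.univ) :
    ∃ G : κ.out → Set (Set X),
      (∀ j, ∀ s ∈ G j, IsClosed s) ∧
      (∀ j, LocallyFinite (fun s : G j => (s : Set X))) ∧
      (∀ j, ∀ s ∈ G j, ∃ u ∈ U, s ⊆ u) ∧
      (⋃ j, ⋃₀ G j) = Set.univ := by
  obtain ⟨ι, F, hcard, hcl, hlf, href, hcov⟩ := hpar U hUo hUc
  have hι : Nonempty ι := by
    by_contra hι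
    rw [not_nonempty_iff] at hι
    rw [iUnion_of_empty] at hcov
    obtain ⟨x⟩ := hne
    exact (hcov ▸ (mem_univ x) : x ∈ (∅ : Set X))
  obtain ⟨e⟩ : Nonempty (ι ↪ κ.out) := by
    rw [← Cardinal.le_def, Cardinal.mk_out]
    exact hcard
  have hσ : Function.Surjective (Function.invFun e) := Function.invFun_surjective e.injective
  refine ⟨fun j => F (Function.invFun e j), fun j => hcl _, fun j => hlf _,
    fun j => href _, ?_⟩
  rw [hσ.iUnion_comp (fun i => ⋃₀ F i)]
  exact hcov

/-- The key step: any closed set `t` splits into a closed piece on which `f` is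
continuous, together with `κ.out`-many locally finite families of closed subsets of
strictly smaller measure. -/
theorem node_exists (hwd : WD f) (κ : Cardinal.{u}) (hne : Nonempty X)
    (hΨ : ∀ F : Set X, IsClosed F →
      ∃ U : Set (Set X), (∀ u ∈ U, IsOpen u) ∧ Cardinal.mk U ≤ κ ∧ F = ⋂₀ U)
    (hpar : ∀ U : Set (Set X), (∀ u ∈ U, IsOpen u) → ⋃₀ U = Set.univ →
      ∃ (ι : Type u) (F : ι → Set (Set X)),
        Cardinal.mk ι ≤ κ ∧
        (∀ i, ∀ s ∈ F i, IsClosed s) ∧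
        (∀ i, LocallyFinite (fun s : F i => (s : Set X))) ∧
        (∀ i, ∀ s ∈ F i, ∃ u ∈ U, s ⊆ u) ∧
        (⋃ i, ⋃₀ F i) = Set.univ)
    (t : Set X) (ht : IsClosed t) :
    ∃ (T : Set X) (ch : κ.out → Set (Set X)),
      IsClosed T ∧ T ⊆ t ∧ ContinuousOn f T ∧
      (∀ j, ∀ s ∈ ch j, IsClosed s ∧ s ⊆ t ∧ msr f s < msr f t) ∧
      (∀ j, LocallyFinite (fun s : ch j => (s : Set X))) ∧
      t ⊆ T ∪ ⋃ j, ⋃₀ ch j := by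
  rcases eq_empty_or_nonempty t with rfl | htne
  · exact ⟨∅, fun _ => ∅, isClosed_empty, Subset.rfl, continuousOn_empty f,
      fun j s hs => absurd hs (notMem_empty s), fun j => by
        haveI : Finite (↥(∅ : Set (Set X))) := Set.finite_empty.to_subtype
        exact locallyFinite_of_finite _,
      by simp⟩
  have hα0 : 0 < msr f t := msr_pos hwd htne
  have hspec : t ∩ der f (msr f t) = ∅ := msr_spec hwd t
  rcases Ordinal.zero_or_succ_or_isSuccLimit (msr f t) with h0 | ⟨β, hβ⟩ | hlim
  · exact absurd h0 hα0.ne'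
  · -- successor case
    obtain ⟨E, hEcl, hEun⟩ := exists_closed_decomp κ hΨ (der f β) (isClosed_der f β)
    refine ⟨t ∩ der f β, fun j => {t ∩ E j}, ht.inter (isClosed_der f β),
      inter_subset_left, ?_, ?_, ?_, ?_⟩
    · intro x hx
      have hnot : x ∉ der f (Order.succ β) := by
        intro hmem
        rw [← hβ] at hspec
        exact (eq_empty_iff_forall_notMem.1 hspec) x ⟨hx.1, hmem⟩
      exact (cwa_of_notin f hx.2 hnot).mono inter_subset_right
    · rintro j s rfl'
      rw [mem_singleton_iff] at rfl'
      subst rfl'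
      refine ⟨ht.inter (hEcl j), inter_subset_left, ?_⟩
      have hdisj : (t ∩ E j) ∩ der f β = ∅ := by
        apply eq_empty_iff_forall_notMem.2
        rintro x ⟨⟨-, hxE⟩, hxd⟩
        have : x ∈ (der f β)ᶜ := hEun ▸ mem_iUnion.2 ⟨j, hxE⟩
        exact this hxd
      calc msr f (t ∩ E j) ≤ β := msr_le hdisj
      _ < Order.succ β := Order.lt_succ β
      _ = msr f t := hβ
    · intro j
      haveI : Finite (↥({t ∩ E j} : Set (Set X))) := (finite_singleton _).to_subtype
      exact locallyFinite_of_finite _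
    · intro x hx
      by_cases hxd : x ∈ der f β
      · exact Or.inl ⟨hx, hxd⟩
      · have : x ∈ ⋃ j, E j := hEun ▸ hxd
        obtain ⟨j, hj⟩ := mem_iUnion.1 this
        exact Or.inr (mem_iUnion.2 ⟨j, by rw [sUnion_singleton]; exact ⟨hx, hj⟩⟩)
  · -- limit case
    set 𝒰 : Set (Set X) := insert tᶜ {v | ∃ β < msr f t, v = (der f (Order.succ β))ᶜ}
      with h𝒰
    have hUo : ∀ u ∈ 𝒰, IsOpen u := by
      rintro u (rfl | ⟨β, -, rfl⟩)
      · exact ht.isOpen_compl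
      · exact (isClosed_der f _).isOpen_compl
    have hUc : ⋃₀ 𝒰 = Set.univ := by
      apply eq_univ_of_forall
      intro x
      by_cases hx : x ∈ t
      · have hxd : x ∉ der f (msr f t) := fun hmem =>
          (eq_empty_iff_forall_notMem.1 hspec) x ⟨hx, hmem⟩
        obtain ⟨β, hβlt, hβ⟩ := notin_succ_of_notin f hxd
        exact ⟨(der f (Order.succ β))ᶜ, Or.inr ⟨β, hβlt, rfl⟩, hβ⟩
      · exact ⟨tᶜ, Or.inl rfl, hx⟩
    obtain ⟨G, hGcl, hGlf, hGref, hGcov⟩ := par_reindex κ hne hpar 𝒰 hUo hUc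
    refine ⟨∅, fun j => {s | ∃ u ∈ G j, s = t ∩ u}, isClosed_empty, empty_subset t,
      continuousOn_empty f, ?_, ?_, ?_⟩
    · rintro j s ⟨u, hu, rfl⟩
      refine ⟨ht.inter (hGcl j u hu), inter_subset_left, ?_⟩
      obtain ⟨v, hv, huv⟩ := hGref j u hu
      rcases hv with rfl | ⟨β, hβlt, rfl⟩
      · have : t ∩ u = ∅ := by
          apply eq_empty_iff_forall_notMem.2
          rintro x ⟨hxt, hxu⟩
          exact (huv hxu) hxt
        rw [this, msr_empty]
        exact hα0
      · have hdisj : (t ∩ u) ∩ der f (Order.succ β) = ∅ := by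
          apply eq_empty_iff_forall_notMem.2
          rintro x ⟨⟨-, hxu⟩, hxd⟩
          exact (huv hxu) hxd
        calc msr f (t ∩ u) ≤ Order.succ β := msr_le hdisj
        _ < msr f t := hlim.succ_lt hβlt
    · intro j
      intro x
      obtain ⟨N, hN, hfin⟩ := hGlf j x
      refine ⟨N, hN, ?_⟩
      have hGfin : {u ∈ G j | (u ∩ N).Nonempty}.Finite :=
        (finite_subtype_iff (p := fun s => (s ∩ N).Nonempty)).1 hfin
      refine (finite_subtype_iff (p := fun s => (s ∩ N).Nonempty)).2
        (((hGfin.image (fun u => t ∩ u)).subset ?_))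
      rintro s ⟨⟨u, hu, rfl⟩, hsN⟩
      exact ⟨u, ⟨hu, hsN.mono (inter_subset_inter inter_subset_right Subset.rfl)⟩, rfl⟩
    · intro x hx
      have : x ∈ ⋃ j, ⋃₀ G j := hGcov ▸ mem_univ x
      obtain ⟨j, hj⟩ := mem_iUnion.1 this
      obtain ⟨u, hu, hxu⟩ := hj
      exact Or.inr (mem_iUnion.2 ⟨j, ⟨t ∩ u, ⟨u, hu, rfl⟩, ⟨hx, hxu⟩⟩⟩)

end DecAux

/-- A map `f : X → Y` is *weakly discontinuous* if for every non-empty subset `A ⊆ X`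
the set of discontinuity points of the restriction `f|A` is nowhere dense in the
subspace `A`. -/
def WeaklyDiscontinuous {X Y : Type*} [TopologicalSpace X] [TopologicalSpace Y]
    (f : X → Y) : Prop :=
  ∀ A : Set X, A.Nonempty →
    IsNowhereDense {a : A | ¬ ContinuousWithinAt f A (a : X)}

theorem dec_le_of_psi_and_par
    {X : Type u} {Y : Type v} [TopologicalSpace X] [TopologicalSpace Y]
    (f : X → Y) (hwd : WeaklyDiscontinuous f)
    (κ : Cardinal.{u}) (hκ : Cardinal.aleph0 ≤ κ)
    -- (i) large pseudocharacter: every closed set is an intersection of ≤ κ open sets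
    (hΨ : ∀ F : Set X, IsClosed F →
      ∃ U : Set (Set X), (∀ u ∈ U, IsOpen u) ∧ Cardinal.mk U ≤ κ ∧ F = ⋂₀ U)
    -- (ii) paracompactness number: every open cover has a closed refinement that is
    -- the union of ≤ κ locally finite families of closed sets
    (hpar : ∀ U : Set (Set X), (∀ u ∈ U, IsOpen u) → ⋃₀ U = Set.univ →
      ∃ (ι : Type u) (F : ι → Set (Set X)),
        Cardinal.mk ι ≤ κ ∧
        (∀ i, ∀ s ∈ F i, IsClosed s) ∧
        (∀ i, LocallyFinite (fun s : F i => (s : Set X))) ∧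
        (∀ i, ∀ s ∈ F i, ∃ u ∈ U, s ⊆ u) ∧
        (⋃ i, ⋃₀ F i) = Set.univ) :
    ∃ C : Set (Set X), Cardinal.mk C ≤ κ ∧ (∀ c ∈ C, IsClosed c) ∧ ⋃₀ C = Set.univ ∧
      ∀ c ∈ C, ContinuousOn f c := by
  classical
  rcases isEmpty_or_nonempty X with hX | hX
  · refine ⟨∅, ?_, fun c hc => absurd hc (notMem_empty c), ?_,
      fun c hc => absurd hc (notMem_empty c)⟩
    · simp
    · rw [sUnion_empty]
      exact (Set.univ_eq_empty_iff.2 hX).symm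
  · have hwd' : DecAux.WD f := hwd
    -- the node-splitting data, as total functions
    have hnode : ∀ t : Set X, ∃ (T : Set X) (ch : Quotient.out κ → Set (Set X)),
        IsClosed t →
        (IsClosed T ∧ T ⊆ t ∧ ContinuousOn f T ∧
          (∀ j, ∀ s ∈ ch j, IsClosed s ∧ s ⊆ t ∧ DecAux.msr f s < DecAux.msr f t) ∧
          (∀ j, LocallyFinite (fun s : ch j => (s : Set X))) ∧
          t ⊆ T ∪ ⋃ j, ⋃₀ ch j) := by
      intro t
      by_cases ht : IsClosed t
      · obtain ⟨T, ch, h1, h2, h3, h4, h5, h6⟩ :=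
          DecAux.node_exists hwd' κ hX hΨ hpar t ht
        exact ⟨T, ch, fun _ => ⟨h1, h2, h3, h4, h5, h6⟩⟩
      · exact ⟨∅, fun _ => ∅, fun h' => absurd h' ht⟩
    choose T ch hprop using hnode
    -- the tree of closed sets
    set tr : List (Quotient.out κ) → Set (Set X) :=
      fun w => w.foldr (fun j A => ⋃ t ∈ A, ch t j) {Set.univ} with htr
    have htr_nil : tr [] = {Set.univ} := rfl
    have htr_cons : ∀ (j) (w), tr (j :: w) = ⋃ t ∈ tr w, ch t j := fun j w => rfl
    -- all members of the tree are closed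
    have hclosed : ∀ w, ∀ t ∈ tr w, IsClosed t := by
      intro w
      induction w with
      | nil => intro t ht; rw [htr_nil, mem_singleton_iff] at ht; subst ht; exact isClosed_univ
      | cons j w ih =>
        intro t ht
        rw [htr_cons] at ht
        obtain ⟨t', ht', hts⟩ := mem_iUnion₂.1 ht
        exact ((hprop t' (ih t' ht')).2.2.2.1 j t hts).1
    -- the tree families are locally finite
    have hlf : ∀ w, LocallyFinite (fun s : tr w => (s : Set X)) := by
      intro w
      induction w with
      | nil =>
        haveI : Finite (↥(tr [])) := by rw [htr_nil]; exact (finite_singleton _).to_subtype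
        exact locallyFinite_of_finite _
      | cons j w ih =>
        intro x
        obtain ⟨N₀, hN₀, hfin₀⟩ := ih x
        have hPfin : {t ∈ tr w | (t ∩ N₀).Nonempty}.Finite :=
          (DecAux.finite_subtype_iff (p := fun s => (s ∩ N₀).Nonempty)).1 hfin₀
        have hnbhd : ∀ t : Set X, ∃ N, N ∈ 𝓝 x ∧
            (IsClosed t → {s ∈ ch t j | (s ∩ N).Nonempty}.Finite) := by
          intro t
          by_cases ht : IsClosed t
          · obtain ⟨N, hN, hf⟩ := (hprop t ht).2.2.2.2.1 j x
            exact ⟨N, hN, fun _ =>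
              (DecAux.finite_subtype_iff (p := fun s => (s ∩ N).Nonempty)).1 hf⟩
          · exact ⟨Set.univ, Filter.univ_mem, fun h' => absurd h' ht⟩
        choose Nt hNt hNtf using hnbhd
        refine ⟨N₀ ∩ ⋂ t ∈ {t ∈ tr w | (t ∩ N₀).Nonempty}, Nt t,
          Filter.inter_mem hN₀ ((Filter.biInter_mem hPfin).2 fun t _ => hNt t), ?_⟩
        refine (DecAux.finite_subtype_iff
          (p := fun s => (s ∩ (N₀ ∩ ⋂ t ∈ {t ∈ tr w | (t ∩ N₀).Nonempty}, Nt t)).Nonempty)).2 ?_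
        refine (hPfin.biUnion (fun t ht => hNtf t (hclosed w t ht.1))).subset ?_
        rintro s ⟨hs, hsN⟩
        rw [htr_cons] at hs
        obtain ⟨t', ht', hts⟩ := mem_iUnion₂.1 hs
        have ht'cl : IsClosed t' := hclosed w t' ht'
        have hst' : s ⊆ t' := ((hprop t' ht'cl).2.2.2.1 j s hts).2.1
        have ht'P : t' ∈ {t ∈ tr w | (t ∩ N₀).Nonempty} := by
          refine ⟨ht', hsN.mono ?_⟩
          exact inter_subset_inter hst' inter_subset_left
        refine mem_biUnion ht'P ⟨hts, hsN.mono ?_⟩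
        refine inter_subset_inter Subset.rfl ?_
        exact inter_subset_right.trans (biInter_subset_of_mem ht'P)
    -- the pieces of the cover
    set Cw : List (Quotient.out κ) → Set X := fun w => ⋃ t ∈ tr w, T t with hCw
    have hCw_eq : ∀ w, Cw w = ⋃ t : tr w, T (t : Set X) := by
      intro w; rw [hCw]; exact biUnion_eq_iUnion _ _
    have hTlf : ∀ w, LocallyFinite (fun t : tr w => T (t : Set X)) := by
      intro w
      refine (hlf w).subset fun t => ?_
      exact (hprop (t : Set X) (hclosed w _ t.2)).2.1
    have hCw_closed : ∀ w, IsClosed (Cw w) := by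
      intro w
      rw [hCw_eq]
      exact (hTlf w).isClosed_iUnion fun t => (hprop _ (hclosed w _ t.2)).1
    have hCw_cont : ∀ w, ContinuousOn f (Cw w) := by
      intro w
      rw [hCw_eq]
      exact DecAux.continuousOn_iUnion_of_lf (hTlf w)
        (fun t => (hprop _ (hclosed w _ t.2)).1)
        (fun t => (hprop _ (hclosed w _ t.2)).2.2.1)
    -- every point is covered
    have hcover : ∀ x : X, ∃ w, x ∈ Cw w := by
      have main : ∀ α : Ordinal.{u}, ∀ t w x, t ∈ tr w → x ∈ t →
          DecAux.msr f t ≤ α → ∃ w', x ∈ Cw w' := by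
        intro α
        induction α using Ordinal.induction with
        | h α IH =>
          intro t w x htw hxt hle
          have htcl : IsClosed t := hclosed w t htw
          rcases (hprop t htcl).2.2.2.2.2 hxt with hxT | hxch
          · exact ⟨w, mem_biUnion htw hxT⟩
          · obtain ⟨j, hj⟩ := mem_iUnion.1 hxch
            obtain ⟨s, hs, hxs⟩ := hj
            have hslt : DecAux.msr f s < DecAux.msr f t :=
              ((hprop t htcl).2.2.2.1 j s hs).2.2
            have hstree : s ∈ tr (j :: w) := by
              rw [htr_cons]
              exact mem_biUnion htw hs
            exact IH (DecAux.msr f s) (lt_of_lt_of_le hslt hle) s (j :: w) x hstree hxs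
              le_rfl
      intro x
      exact main (DecAux.msr f Set.univ) Set.univ [] x (by rw [htr_nil]; rfl)
        (mem_univ x) le_rfl
    -- assemble
    refine ⟨Set.range Cw, ?_, ?_, ?_, ?_⟩
    · have h1 : Cardinal.mk (Set.range Cw) ≤ Cardinal.mk (List (Quotient.out κ)) :=
        Cardinal.mk_range_le
      haveI : Infinite (Quotient.out κ) := by
        rw [Cardinal.infinite_iff, Cardinal.mk_out]
        exact hκ
      rwa [Cardinal.mk_list_eq_mk, Cardinal.mk_out] at h1
    · rintro c ⟨w, rfl⟩
      exact hCw_closed w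
    · apply eq_univ_of_forall
      intro x
      obtain ⟨w, hw⟩ := hcover x
      exact ⟨Cw w, ⟨w, rfl⟩, hw⟩
    · rintro c ⟨w, rfl⟩
      exact hCw_cont w
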